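/- Let θ : [0,1] → ℝ^d be continuous with |θ(t)| = 1 for all t, let λ, L > 0, and define F : ℝ^d → M_{d+1}(ℝ) by F(x) = [[0, x],[xᵀ, 0]] in block form. Suppose Γ : [0,1] → M_{d+1}(ℝ) is differentiable with Γ(0) = I_{d+1} and Γ′(t) = F(λLθ(t)) Γ(t) for all t, and suppose η : (0,1] → ℝ^d and ρ : (0,1] → (0,∞) are differentiable functions with |η(t)| = 1 such that Γ(t)o = (η(t) sinh ρ(t), cosh ρ(t))ᵀ for all t ∈ (0,1], where o = (0,…,0,1)ᵀ ∈ ℝ^{d+1}. Then for all t ∈ (0,1]: η′(t) = λL coth(ρ(t)) (θ(t) − ⟨θ(t), η(t)⟩ η(t)) and ρ′(t) = λL ⟨θ(t), η(t)⟩. -/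

import Mathlib

open Real Set

/-- The linear map `F : ℝ^d → so(d,1) ⊂ M_{d+1}(ℝ)`, `F(x) = [[0, x], [xᵀ, 0]]` in
`(d,1)`-block form (the index type `Fin d ⊕ Unit` realizes `{1,…,d+1}`). -/
noncomputable def cartanF {d : ℕ} (x : Fin d → ℝ) :
    Matrix (Fin d ⊕ Unit) (Fin d ⊕ Unit) ℝ :=
  Matrix.fromBlocks 0 (Matrix.of fun i _ => x i) (Matrix.of fun _ j => x j) 0

/-- Let `θ : [0,1] → ℝ^d` be continuous and unit-valued, `lam, L > 0`, and let
`Γ` be the Cartan development of the rescaled path, i.e. `Γ(0) = I` and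
`Γ′(t) = F(lam·L·θ(t)) Γ(t)`.  Suppose the development `Γ(t)o` of the rescaled path on the
hyperboloid is written in polar coordinates `(η(t) sinh ρ(t), cosh ρ(t))` with `η`
unit-valued and `η, ρ` differentiable on `(0,1]`.  Then on `(0,1]`:
`η′ = lam·L·coth(ρ)(θ − ⟨θ,η⟩η)` and `ρ′ = lam·L·⟨θ,η⟩`. -/
theorem hyperbolic_development_ODE
    {d : ℕ} (θ : ℝ → EuclideanSpace ℝ (Fin d))
    (hθc : ContinuousOn θ (Icc 0 1)) (hθ1 : ∀ t ∈ Icc (0 : ℝ) 1, ‖θ t‖ = 1)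
    (lam L : ℝ) (hlam : 0 < lam) (hL : 0 < L)
    (Γ : ℝ → Matrix (Fin d ⊕ Unit) (Fin d ⊕ Unit) ℝ)
    (hΓ0 : Γ 0 = 1)
    (hΓ : ∀ t ∈ Icc (0 : ℝ) 1, ∀ a b, HasDerivAt (fun s => Γ s a b)
      ((cartanF (fun i => lam * L * θ t i) * Γ t) a b) t)
    (η : ℝ → EuclideanSpace ℝ (Fin d)) (ρ : ℝ → ℝ)
    (hη1 : ∀ t ∈ Ioc (0 : ℝ) 1, ‖η t‖ = 1)
    (hρpos : ∀ t ∈ Ioc (0 : ℝ) 1, 0 < ρ t)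
    (hηd : ∀ t ∈ Ioc (0 : ℝ) 1, DifferentiableAt ℝ η t)
    (hρd : ∀ t ∈ Ioc (0 : ℝ) 1, DifferentiableAt ℝ ρ t)
    (hdev : ∀ t ∈ Ioc (0 : ℝ) 1,
      (Γ t).mulVec (Sum.elim (0 : Fin d → ℝ) (fun _ => 1)) =
        Sum.elim (fun i => η t i * Real.sinh (ρ t)) (fun _ => Real.cosh (ρ t))) :
    ∀ t ∈ Ioc (0 : ℝ) 1,
      deriv η t = (lam * L * (Real.cosh (ρ t) / Real.sinh (ρ t))) •
          (θ t - (inner ℝ (θ t) (η t) : ℝ) • η t) ∧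
        deriv ρ t = lam * L * (inner ℝ (θ t) (η t) : ℝ) := by

  intro t ht
  obtain ⟨ht0, ht1⟩ := ht
  have htI : t ∈ Icc (0 : ℝ) 1 := ⟨le_of_lt ht0, ht1⟩
  have htS : t ∈ Ioc (0 : ℝ) 1 := ⟨ht0, ht1⟩
  set S : Set ℝ := Ioc (0 : ℝ) 1 with hS
  have hU : UniqueDiffWithinAt ℝ S t := uniqueDiffOn_Ioc 0 1 t htS
  set x : Fin d → ℝ := fun i => lam * L * θ t i with hx
  -- the entries of Γ s applied to the base point
  have hmul : ∀ s (a : Fin d ⊕ Unit),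
      (Γ s).mulVec (Sum.elim (0 : Fin d → ℝ) (fun _ => 1)) a = Γ s a (Sum.inr ()) := by
    intro s a
    simp [Matrix.mulVec, dotProduct, Fintype.sum_sum_type]
  -- the polar expression of the entries on S
  have hdev1 : ∀ s ∈ S, ∀ i, Γ s (Sum.inl i) (Sum.inr ()) = η s i * Real.sinh (ρ s) := by
    intro s hs i
    have := congrFun (hdev s hs) (Sum.inl i)
    rw [hmul] at this
    simpa using this
  have hdev2 : ∀ s ∈ S, Γ s (Sum.inr ()) (Sum.inr ()) = Real.cosh (ρ s) := by
    intro s hs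
    have := congrFun (hdev s hs) (Sum.inr ())
    rw [hmul] at this
    simpa using this
  -- derivative facts for η and ρ
  have hρ' : HasDerivAt ρ (deriv ρ t) t := (hρd t htS).hasDerivAt
  have hη' : HasDerivAt η (deriv η t) t := (hηd t htS).hasDerivAt
  have hηi : ∀ i : Fin d, HasDerivAt (fun s => η s i) (deriv η t i) t := by
    intro i
    have := (EuclideanSpace.proj (𝕜 := ℝ) i).hasFDerivAt.comp_hasDerivAt t hη'
    exact this
  have hsρ : HasDerivAt (fun s => Real.sinh (ρ s)) (Real.cosh (ρ t) * deriv ρ t) t :=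
    (Real.hasDerivAt_sinh (ρ t)).comp t hρ'
  have hcρ : HasDerivAt (fun s => Real.cosh (ρ s)) (Real.sinh (ρ t) * deriv ρ t) t :=
    (Real.hasDerivAt_cosh (ρ t)).comp t hρ'
  -- the matrix product entries
  have hprod1 : ∀ i : Fin d, (cartanF x * Γ t) (Sum.inl i) (Sum.inr ()) =
      x i * Real.cosh (ρ t) := by
    intro i
    rw [← hdev2 t htS]
    simp [cartanF, Matrix.mul_apply, Fintype.sum_sum_type, Matrix.fromBlocks]
  have hprod2 : (cartanF x * Γ t) (Sum.inr ()) (Sum.inr ()) =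
      ∑ j, x j * (η t j * Real.sinh (ρ t)) := by
    rw [Matrix.mul_apply, Fintype.sum_sum_type]
    simp only [cartanF, Matrix.fromBlocks_apply₂₁, Matrix.fromBlocks_apply₂₂,
      Matrix.of_apply, Matrix.zero_apply, zero_mul, Finset.sum_const, smul_eq_mul,
      mul_zero, add_zero]
    refine (by simpa using Finset.sum_congr rfl fun j _ => by rw [hdev1 t htS j])
  -- derivatives of the entries, transferred to the polar expressions within S
  have key1 : ∀ i : Fin d, deriv η t i * Real.sinh (ρ t) +
      Real.cosh (ρ t) * deriv ρ t * η t i = x i * Real.cosh (ρ t) := by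
    intro i
    have hA : HasDerivWithinAt (fun s => η s i * Real.sinh (ρ s))
        (deriv η t i * Real.sinh (ρ t) + Real.cosh (ρ t) * deriv ρ t * η t i) S t := by
      have := ((hηi i).mul hsρ).hasDerivWithinAt (s := S)
      refine this.congr_deriv ?_
      ring
    have hB : HasDerivWithinAt (fun s => η s i * Real.sinh (ρ s))
        (x i * Real.cosh (ρ t)) S t := by
      have h0 := ((hΓ t htI (Sum.inl i) (Sum.inr ())).hasDerivWithinAt (s := S))
      rw [hprod1 i] at h0
      exact h0.congr (fun s hs => (hdev1 s hs i).symm) (hdev1 t htS i).symm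
    rw [← hA.derivWithin hU, ← hB.derivWithin hU]
  have key2 : Real.sinh (ρ t) * deriv ρ t = ∑ j, x j * (η t j * Real.sinh (ρ t)) := by
    have hA : HasDerivWithinAt (fun s => Real.cosh (ρ s))
        (Real.sinh (ρ t) * deriv ρ t) S t := hcρ.hasDerivWithinAt
    have hB : HasDerivWithinAt (fun s => Real.cosh (ρ s))
        (∑ j, x j * (η t j * Real.sinh (ρ t))) S t := by
      have h0 := ((hΓ t htI (Sum.inr ()) (Sum.inr ())).hasDerivWithinAt (s := S))
      rw [hprod2] at h0
      exact h0.congr (fun s hs => (hdev2 s hs).symm) (hdev2 t htS).symm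
    rw [← hA.derivWithin hU, ← hB.derivWithin hU]
  -- basic positivity and inner product formula
  have hsinh : 0 < Real.sinh (ρ t) := Real.sinh_pos_iff.mpr (hρpos t htS)
  have hinner : (inner ℝ (θ t) (η t) : ℝ) = ∑ j, θ t j * η t j := by
    simp [PiLp.inner_apply, RCLike.inner_apply, conj_trivial]
    exact Finset.sum_congr rfl fun j _ => mul_comm _ _
  -- the ρ equation
  have hρeq : deriv ρ t = lam * L * (inner ℝ (θ t) (η t) : ℝ) := by
    have : Real.sinh (ρ t) * deriv ρ t =
        Real.sinh (ρ t) * (lam * L * (inner ℝ (θ t) (η t) : ℝ)) := by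
      rw [key2, hinner, Finset.mul_sum, Finset.sum_congr rfl fun j _ => rfl]
      rw [Finset.mul_sum]
      refine Finset.sum_congr rfl fun j _ => ?_
      simp only [hx]
      ring
    exact mul_left_cancel₀ (ne_of_gt hsinh) this
  refine ⟨?_, hρeq⟩
  -- the η equation, componentwise
  ext i
  have hk := key1 i
  rw [hρeq] at hk
  have : deriv η t i = lam * L * (Real.cosh (ρ t) / Real.sinh (ρ t)) *
      (θ t i - (inner ℝ (θ t) (η t) : ℝ) * η t i) := by
    have hne := ne_of_gt hsinh
    rw [hinner] at hk
    simp only [hx] at hk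
    field_simp
    rw [hinner]
    linear_combination hk
  simpa [PiLp.smul_apply, PiLp.sub_apply, smul_eq_mul] using this
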